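/- Let T > 0 and let φ : [0,T]×[0,∞) → [0,∞) be continuous with φ(t,x) ≤ k₁ + k₂·x for all (t,x) and some constants k₁, k₂ > 0. Then for every t ∈ [0,T), every s > 0 and every i, j ∈ χ one has lim_{u↓0} ∫_0^∞ φ(t+u,x)·α(x;t,s,i,u) dx = φ(t,s). -/

import Mathlib

open MeasureTheory Real Filter Set


noncomputable def sigbar {k : ℕ} (σ : ℝ → Fin k → ℝ) (t : ℝ) (i : Fin k) (v : ℝ) : ℝ :=
  Real.sqrt (∫ u in t..(t+v), (σ u i)^2)

noncomputable def Lfun {k : ℕ} (r : Fin k → ℝ) (σ : ℝ → Fin k → ℝ)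
    (t x s : ℝ) (i : Fin k) (v : ℝ) : ℝ :=
  (Real.log (x / s) - ∫ u in t..(t+v), (r i - (σ u i)^2 / 2)) / sigbar σ t i v

noncomputable def alphaDens {k : ℕ} (r : Fin k → ℝ) (σ : ℝ → Fin k → ℝ)
    (x t s : ℝ) (i : Fin k) (v : ℝ) : ℝ :=
  Real.exp (-(Lfun r σ t x s i v)^2 / 2) / (Real.sqrt (2 * Real.pi) * x * sigbar σ t i v)

noncomputable def mval {k : ℕ} (r : Fin k → ℝ) (σ : ℝ → Fin k → ℝ) (t : ℝ) (i : Fin k) (u : ℝ) : ℝ :=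
  ∫ w in t..(t+u), (r i - (σ w i)^2 / 2)

noncomputable def gval {k : ℕ} (r : Fin k → ℝ) (σ : ℝ → Fin k → ℝ) (t s : ℝ) (i : Fin k) (u z : ℝ) : ℝ :=
  s * Real.exp (mval r σ t i u + sigbar σ t i u * z)

lemma gval_pos {k : ℕ} (r : Fin k → ℝ) (σ : ℝ → Fin k → ℝ) (t s : ℝ) (i : Fin k) (u z : ℝ)
    (hs : 0 < s) : 0 < gval r σ t s i u z := by
  unfold gval; positivity

lemma gauss_norm : (∫ z : ℝ, Real.exp (-z^2/2)) = Real.sqrt (2*Real.pi) := by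
  have h : (fun z : ℝ => Real.exp (-z^2/2)) = fun z : ℝ => Real.exp (-(1/2)*z^2) :=
    funext fun z => congrArg Real.exp (by ring)
  rw [h, integral_gaussian, show (Real.pi/(1/2):ℝ) = 2*Real.pi by ring]

lemma gauss_integrable : Integrable (fun z : ℝ => Real.exp (-z^2/2)) := by
  have h : (fun z : ℝ => Real.exp (-z^2/2)) = fun z : ℝ => Real.exp (-(1/2)*z^2) :=
    funext fun z => congrArg Real.exp (by ring)
  rw [h]; exact integrable_exp_neg_mul_sq (by norm_num)

lemma exp_abs_integrable (c : ℝ) : Integrable (fun z : ℝ => Real.exp (c * |z| - z^2/2)) := by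
  have h4 : Integrable (fun z : ℝ => Real.exp (c^2) * Real.exp (-(1/4:ℝ)*z^2)) :=
    (integrable_exp_neg_mul_sq (by norm_num)).const_mul _
  refine h4.mono' ?_ (ae_of_all _ fun z => ?_)
  · exact (Real.continuous_exp.comp
      ((continuous_const.mul _root_.continuous_abs).sub
        ((continuous_pow 2).div_const 2))).aestronglyMeasurable
  · rw [Real.norm_eq_abs, abs_of_pos (Real.exp_pos _), ← Real.exp_add]
    exact Real.exp_le_exp.2 (by nlinarith [sq_nonneg (2*c - |z|), sq_abs z])

lemma cov_lemma (s m c : ℝ) (hs : 0 < s) (hc : 0 < c) (G : ℝ → ℝ) :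
    ∫ x in Set.Ioi (0:ℝ), G x
      = ∫ z : ℝ, (c * (s * Real.exp (m + c * z))) * G (s * Real.exp (m + c * z)) := by
  have himg : (fun z : ℝ => s * Real.exp (m + c * z)) '' Set.univ = Set.Ioi 0 := by
    rw [Set.image_univ]; ext y; simp only [Set.mem_range, Set.mem_Ioi]
    constructor
    · rintro ⟨z, rfl⟩; positivity
    · intro hy
      refine ⟨(Real.log (y/s) - m)/c, ?_⟩
      rw [mul_comm c, div_mul_cancel₀ _ hc.ne', add_sub_cancel,
        Real.exp_log (div_pos hy hs), mul_comm, div_mul_cancel₀ _ hs.ne']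
  have hd : ∀ x ∈ Set.univ, HasDerivWithinAt (fun z : ℝ => s * Real.exp (m + c * z))
      (c * (s * Real.exp (m + c * x))) Set.univ x := by
    intro x _
    have h1 : HasDerivAt (fun z : ℝ => m + c * z) c x := by
      simpa using ((hasDerivAt_id x).const_mul c).const_add m
    have h2 := h1.exp.const_mul s
    have h3 : HasDerivAt (fun z : ℝ => s * Real.exp (m + c * z))
        (c * (s * Real.exp (m + c * x))) x := by
      exact h2.congr_deriv (by ring)
    exact h3.hasDerivWithinAt
  have hinj : Set.InjOn (fun z : ℝ => s * Real.exp (m + c * z)) Set.univ := by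
    have hsm : StrictMono (fun z : ℝ => s * Real.exp (m + c * z)) := by
      intro a b hab
      exact mul_lt_mul_of_pos_left (Real.exp_lt_exp.2 (by nlinarith)) hs
    exact hsm.injective.injOn
  rw [← himg, integral_image_eq_integral_abs_deriv_smul MeasurableSet.univ hd hinj G,
    Measure.restrict_univ]
  congr 1; funext z
  rw [smul_eq_mul, abs_of_pos (by positivity)]

lemma alpha_formula {k : ℕ} (r : Fin k → ℝ) (σ : ℝ → Fin k → ℝ) (t s u z : ℝ) (i : Fin k)
    (hs : 0 < s) (hc : 0 < sigbar σ t i u) :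
    alphaDens r σ (gval r σ t s i u z) t s i u
      = Real.exp (-z^2/2) / (Real.sqrt (2*Real.pi) * gval r σ t s i u z * sigbar σ t i u) := by
  have hL : Lfun r σ t (gval r σ t s i u z) s i u = z := by
    simp only [Lfun, gval, mval]
    rw [mul_comm s, mul_div_assoc, div_self hs.ne', mul_one, Real.log_exp,
      add_sub_cancel_left, mul_div_cancel_left₀ _ hc.ne']
  rw [alphaDens, hL]
theorem stmt_11 {k : ℕ} (r : Fin k → ℝ) (σ : ℝ → Fin k → ℝ)
    (hr : ∀ i : Fin k, 0 ≤ r i)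
    (hσpos : ∀ w : ℝ, 0 ≤ w → ∀ i : Fin k, 0 < σ w i)
    (hσcont : ∀ i : Fin k, ContinuousOn (fun w => σ w i) (Set.Ici 0))
    (T : ℝ) (hT : 0 < T)
    (φ : ℝ → ℝ → ℝ)
    (hφcont : ContinuousOn (fun p : ℝ × ℝ => φ p.1 p.2) (Set.Icc 0 T ×ˢ Set.Ici 0))
    (hφnn : ∀ t ∈ Set.Icc (0:ℝ) T, ∀ x ∈ Set.Ici (0:ℝ), 0 ≤ φ t x)
    (k₁ k₂ : ℝ) (hk₁ : 0 < k₁) (hk₂ : 0 < k₂)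
    (hφgrow : ∀ t ∈ Set.Icc (0:ℝ) T, ∀ x ∈ Set.Ici (0:ℝ), φ t x ≤ k₁ + k₂ * x)
    (t s : ℝ) (ht : t ∈ Set.Ico 0 T) (hs : 0 < s) (i : Fin k) :
    Tendsto (fun u => ∫ x in Set.Ioi (0:ℝ), φ (t + u) x * alphaDens r σ x t s i u)
      (nhdsWithin 0 (Set.Ioi 0)) (nhds (φ t s)) := by
  obtain ⟨ht0, htT⟩ := ht
  have hKsub : Set.Icc t (t+1) ⊆ Set.Ici (0:ℝ) := fun w hw => le_trans ht0 hw.1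
  obtain ⟨M, hM⟩ := isCompact_Icc.exists_bound_of_continuousOn ((hσcont i).mono hKsub)
  have hM0 : 0 ≤ M := le_trans (norm_nonneg _) (hM t ⟨le_refl t, by linarith⟩)
  set C₁ : ℝ := |r i| + M^2/2 with hC₁
  have hC₁0 : 0 ≤ C₁ := by positivity
  set δ : ℝ := min 1 (T - t) with hδdef
  have hδ0 : 0 < δ := lt_min one_pos (by linarith)
  have hδ1 : δ ≤ 1 := min_le_left _ _
  have hδT : δ ≤ T - t := min_le_right _ _
  have hev : ∀ᶠ u in nhdsWithin (0:ℝ) (Set.Ioi 0), u ∈ Set.Ioc (0:ℝ) δ :=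
    Ioc_mem_nhdsGT_of_mem ⟨le_refl 0, hδ0⟩
  have hii : ∀ u ∈ Set.Ioc (0:ℝ) δ, IntervalIntegrable (fun w => (σ w i)^2) volume t (t+u) := by
    intro u hu
    apply ContinuousOn.intervalIntegrable
    rw [Set.uIcc_of_le (by linarith [hu.1] : t ≤ t + u)]
    exact ((hσcont i).mono (fun w hw => le_trans ht0 hw.1)).pow 2
  have hcpos : ∀ u ∈ Set.Ioc (0:ℝ) δ, 0 < sigbar σ t i u := by
    intro u hu
    rw [sigbar, Real.sqrt_pos]
    refine intervalIntegral.intervalIntegral_pos_of_pos_on (hii u hu) ?_ (by linarith [hu.1])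
    intro x hx
    exact pow_pos (hσpos x (le_trans ht0 hx.1.le) i) 2
  have hI_bd : ∀ u ∈ Set.Ioc (0:ℝ) δ, |∫ w in t..(t+u), (σ w i)^2| ≤ M^2 * u := by
    intro u hu
    have hnb : ∀ x ∈ Set.uIoc t (t+u), ‖(σ x i)^2‖ ≤ M^2 := by
      intro x hx
      rw [Set.uIoc_of_le (by linarith [hu.1] : t ≤ t + u)] at hx
      have hx1 : x ∈ Set.Icc t (t+1) := ⟨hx.1.le, le_trans hx.2 (by linarith [hu.2, hδ1])⟩
      rw [norm_pow]
      exact pow_le_pow_left₀ (norm_nonneg _) (hM x hx1) 2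
    have h := intervalIntegral.norm_integral_le_of_norm_le_const hnb
    rwa [show t + u - t = u by ring, Real.norm_eq_abs, abs_of_pos hu.1] at h
  have hm_bd : ∀ u ∈ Set.Ioc (0:ℝ) δ, |mval r σ t i u| ≤ C₁ * u := by
    intro u hu
    have hnb : ∀ x ∈ Set.uIoc t (t+u), ‖r i - (σ x i)^2/2‖ ≤ C₁ := by
      intro x hx
      rw [Set.uIoc_of_le (by linarith [hu.1] : t ≤ t + u)] at hx
      have hx1 : x ∈ Set.Icc t (t+1) := ⟨hx.1.le, le_trans hx.2 (by linarith [hu.2, hδ1])⟩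
      have h1 : |σ x i| ≤ M := by have := hM x hx1; rwa [Real.norm_eq_abs] at this
      have h2 : (σ x i)^2 ≤ M^2 := by nlinarith [abs_nonneg (σ x i), sq_abs (σ x i)]
      rw [Real.norm_eq_abs, hC₁, abs_le]
      constructor
      · nlinarith [neg_abs_le (r i), sq_nonneg (σ x i)]
      · nlinarith [le_abs_self (r i), sq_nonneg (σ x i)]
    have h := intervalIntegral.norm_integral_le_of_norm_le_const hnb
    rw [mval]
    rwa [show t + u - t = u by ring, Real.norm_eq_abs, abs_of_pos hu.1] at h
  have hc_le : ∀ u ∈ Set.Ioc (0:ℝ) δ, sigbar σ t i u ≤ M := by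
    intro u hu
    rw [sigbar]
    calc Real.sqrt (∫ w in t..t+u, (σ w i)^2) ≤ Real.sqrt (M^2 * u) :=
          Real.sqrt_le_sqrt (le_trans (le_abs_self _) (hI_bd u hu))
      _ ≤ Real.sqrt (M^2 * 1) := Real.sqrt_le_sqrt (by nlinarith [hu.2, hδ1, sq_nonneg M, hu.1])
      _ = M := by rw [mul_one, Real.sqrt_sq hM0]
  have hmlim : Tendsto (fun u => mval r σ t i u) (nhdsWithin 0 (Set.Ioi 0)) (nhds 0) := by
    apply squeeze_zero_norm' (a := fun u : ℝ => C₁ * u)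
    · filter_upwards [hev] with u hu
      rw [Real.norm_eq_abs]; exact hm_bd u hu
    · have h : Tendsto (fun u : ℝ => C₁ * u) (nhds 0) (nhds (C₁ * 0)) :=
        (continuous_const.mul continuous_id).tendsto 0
      simpa using h.mono_left nhdsWithin_le_nhds
  have hclim : Tendsto (fun u => sigbar σ t i u) (nhdsWithin 0 (Set.Ioi 0)) (nhds 0) := by
    have hIlim : Tendsto (fun u => ∫ w in t..(t+u), (σ w i)^2)
        (nhdsWithin 0 (Set.Ioi 0)) (nhds 0) := by
      apply squeeze_zero_norm' (a := fun u : ℝ => M^2 * u)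
      · filter_upwards [hev] with u hu
        rw [Real.norm_eq_abs]; exact hI_bd u hu
      · have h : Tendsto (fun u : ℝ => M^2 * u) (nhds 0) (nhds (M^2 * 0)) :=
          (continuous_const.mul continuous_id).tendsto 0
        simpa using h.mono_left nhdsWithin_le_nhds
    have h := (Real.continuous_sqrt.tendsto 0).comp hIlim
    simpa [sigbar, Function.comp_def, Real.sqrt_zero] using h
  have hmemD : ∀ u ∈ Set.Ioc (0:ℝ) δ, ∀ z : ℝ,
      ((t+u : ℝ), gval r σ t s i u z) ∈ Set.Icc (0:ℝ) T ×ˢ Set.Ici (0:ℝ) := by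
    intro u hu z
    refine ⟨⟨?_, ?_⟩, ?_⟩
    · show (0:ℝ) ≤ t + u; linarith [hu.1]
    · show t + u ≤ T; linarith [hu.2, hδT]
    · exact (gval_pos r σ t s i u z hs).le
  have hGcont : Continuous (fun z : ℝ => Real.exp (-z^2/2) / Real.sqrt (2*Real.pi)) := by
    fun_prop
  have hsqrt_pos : 0 < Real.sqrt (2*Real.pi) := Real.sqrt_pos.2 (by positivity)
  have hGpos : ∀ z : ℝ, 0 ≤ Real.exp (-z^2/2) / Real.sqrt (2*Real.pi) := fun z => by positivity
  have hcont : ∀ u ∈ Set.Ioc (0:ℝ) δ, Continuous (fun z => φ (t+u) (gval r σ t s i u z)) := by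
    intro u hu
    have hgc : Continuous (fun z : ℝ => gval r σ t s i u z) := by
      unfold gval; fun_prop
    exact hφcont.comp_continuous (continuous_const.prodMk hgc) (hmemD u hu)
  set bound : ℝ → ℝ := fun z => k₁ * (Real.exp (-z^2/2) / Real.sqrt (2*Real.pi))
      + (k₂ * s * Real.exp C₁ / Real.sqrt (2*Real.pi)) * Real.exp (M*|z| - z^2/2) with hbd
  have hbound_int : Integrable bound := by
    rw [hbd]
    exact ((gauss_integrable.div_const _).const_mul k₁).add ((exp_abs_integrable M).const_mul _)
  have hFbound : ∀ u ∈ Set.Ioc (0:ℝ) δ, ∀ z : ℝ,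
      ‖φ (t+u) (gval r σ t s i u z) * (Real.exp (-z^2/2) / Real.sqrt (2*Real.pi))‖ ≤ bound z := by
    intro u hu z
    have hgz := gval_pos r σ t s i u z hs
    have hmem := hmemD u hu z
    have hφ0 : 0 ≤ φ (t+u) (gval r σ t s i u z) := hφnn _ hmem.1 _ hmem.2
    have hgr : φ (t+u) (gval r σ t s i u z) ≤ k₁ + k₂ * gval r σ t s i u z :=
      hφgrow _ hmem.1 _ hmem.2
    have hgle : gval r σ t s i u z ≤ s * Real.exp (C₁ + M * |z|) := by
      rw [gval]
      refine mul_le_mul_of_nonneg_left (Real.exp_le_exp.2 ?_) hs.le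
      have h1 : mval r σ t i u ≤ C₁ :=
        le_trans (le_abs_self _) (le_trans (hm_bd u hu)
          (by nlinarith [hu.1, hu.2, hδ1, hC₁0]))
      have h2 : sigbar σ t i u * z ≤ M * |z| := by
        refine le_trans (le_abs_self _) ?_
        rw [abs_mul, abs_of_pos (hcpos u hu)]
        exact mul_le_mul_of_nonneg_right (hc_le u hu) (abs_nonneg z)
      linarith
    rw [Real.norm_eq_abs, abs_of_nonneg (mul_nonneg hφ0 (hGpos z))]
    calc φ (t+u) (gval r σ t s i u z) * (Real.exp (-z^2/2)/Real.sqrt (2*Real.pi))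
        ≤ (k₁ + k₂ * (s * Real.exp (C₁ + M*|z|))) * (Real.exp (-z^2/2)/Real.sqrt (2*Real.pi)) := by
          refine mul_le_mul_of_nonneg_right ?_ (hGpos z)
          have h3 := mul_le_mul_of_nonneg_left hgle hk₂.le
          linarith
      _ = bound z := by
          simp only [hbd]
          rw [Real.exp_add,
            show Real.exp (M*|z| - z^2/2) = Real.exp (M*|z|) * Real.exp (-z^2/2) from by
              rw [← Real.exp_add]; congr 1; ring]
          field_simp
  have hlim : ∀ z : ℝ, Tendsto
      (fun u => φ (t+u) (gval r σ t s i u z) * (Real.exp (-z^2/2)/Real.sqrt (2*Real.pi)))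
      (nhdsWithin 0 (Set.Ioi 0)) (nhds (φ t s * (Real.exp (-z^2/2)/Real.sqrt (2*Real.pi)))) := by
    intro z
    apply Tendsto.mul_const
    have hpair : Tendsto (fun u => ((t+u : ℝ), gval r σ t s i u z)) (nhdsWithin 0 (Set.Ioi 0))
        (nhdsWithin (t, s) (Set.Icc (0:ℝ) T ×ˢ Set.Ici (0:ℝ))) := by
      rw [tendsto_nhdsWithin_iff]
      constructor
      · apply Tendsto.prodMk_nhds
        · have h : Tendsto (fun u : ℝ => t + u) (nhds 0) (nhds (t + 0)) :=
            (continuous_const.add continuous_id).tendsto 0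
          simpa using h.mono_left nhdsWithin_le_nhds
        · have h1 : Tendsto (fun u => mval r σ t i u + sigbar σ t i u * z)
              (nhdsWithin 0 (Set.Ioi 0)) (nhds 0) := by
            simpa using hmlim.add (hclim.mul_const z)
          have h2 := (Real.continuous_exp.tendsto 0).comp h1
          have h3 := h2.const_mul s
          simpa [gval, Function.comp, Real.exp_zero] using h3
      · filter_upwards [hev] with u hu
        exact hmemD u hu z
    have hcw : ContinuousWithinAt (fun p : ℝ × ℝ => φ p.1 p.2)
        (Set.Icc (0:ℝ) T ×ˢ Set.Ici (0:ℝ)) (t, s) := hφcont (t, s) ⟨⟨ht0, htT.le⟩, hs.le⟩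
    exact hcw.tendsto.comp hpair
  have hEq : ∀ u ∈ Set.Ioc (0:ℝ) δ,
      (∫ x in Set.Ioi (0:ℝ), φ (t + u) x * alphaDens r σ x t s i u)
        = ∫ z : ℝ, φ (t+u) (gval r σ t s i u z) * (Real.exp (-z^2/2)/Real.sqrt (2*Real.pi)) := by
    intro u hu
    have hc := hcpos u hu
    rw [cov_lemma s (mval r σ t i u) (sigbar σ t i u) hs hc
      (fun x => φ (t+u) x * alphaDens r σ x t s i u)]
    congr 1; funext z
    have hAF : alphaDens r σ (s * Real.exp (mval r σ t i u + sigbar σ t i u * z)) t s i u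
        = Real.exp (-z^2/2) / (Real.sqrt (2*Real.pi)
            * (s * Real.exp (mval r σ t i u + sigbar σ t i u * z)) * sigbar σ t i u) :=
      alpha_formula r σ t s u z i hs hc
    rw [hAF]
    have hA : (0:ℝ) < s * Real.exp (mval r σ t i u + sigbar σ t i u * z) := by positivity
    have hgveq : gval r σ t s i u z = s * Real.exp (mval r σ t i u + sigbar σ t i u * z) := rfl
    rw [hgveq]
    field_simp
  have hval : (∫ z : ℝ, φ t s * (Real.exp (-z^2/2)/Real.sqrt (2*Real.pi))) = φ t s := by
    rw [MeasureTheory.integral_const_mul, MeasureTheory.integral_div, gauss_norm,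
      div_self hsqrt_pos.ne', mul_one]
  have hmain := MeasureTheory.tendsto_integral_filter_of_dominated_convergence
      (μ := volume)
      (F := fun u z => φ (t+u) (gval r σ t s i u z) * (Real.exp (-z^2/2)/Real.sqrt (2*Real.pi)))
      (f := fun z => φ t s * (Real.exp (-z^2/2)/Real.sqrt (2*Real.pi)))
      (l := nhdsWithin (0:ℝ) (Set.Ioi 0)) bound
      (by filter_upwards [hev] with u hu
          exact ((hcont u hu).mul hGcont).aestronglyMeasurable)
      (by filter_upwards [hev] with u hu
          exact ae_of_all _ (hFbound u hu))
      hbound_int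
      (ae_of_all _ fun z => hlim z)
  rw [hval] at hmain
  exact Tendsto.congr' (by filter_upwards [hev] with u hu; exact (hEq u hu).symm) hmain
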